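/- Let G = C_n be the cycle on n vertices, n >= 3. Then the maximal ideal (x_1,...,x_n) is an associated prime of S/NI(G)^2 if and only if n = 5. -/

import Mathlib

open MvPolynomial
open scoped Classical

/-- The closed neighborhood of a vertex `i` of `G`, as a `Finset`. -/
noncomputable def closedNbhd {n : ℕ} (G : SimpleGraph (Fin n)) (i : Fin n) : Finset (Fin n) :=
  Finset.univ.filter (fun j => j = i ∨ G.Adj i j)

/-- The closed neighborhood ideal of `G` in `k[x_1, …, x_n]`. -/
noncomputable def NI (k : Type*) [Field k] {n : ℕ} (G : SimpleGraph (Fin n)) :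
    Ideal (MvPolynomial (Fin n) k) :=
  Ideal.span (Set.range fun i => ∏ j ∈ closedNbhd G i, X j)

/-- The maximal homogeneous ideal `(x_1, …, x_n)`. -/
noncomputable def maxIdeal (k : Type*) [Field k] (n : ℕ) : Ideal (MvPolynomial (Fin n) k) :=
  Ideal.span (Set.range (X : Fin n → MvPolynomial (Fin n) k))


set_option linter.unusedSectionVars false
open Fin.NatCast Fin.CommRing
section MonIdeal
variable {k : Type*} [Field k] {σ : Type*} {ι : Type*} [Fintype ι]

lemma prod_X_eq_monomial (s : Finset σ) :
    (∏ j ∈ s, X j : MvPolynomial σ k) = monomial (∑ j ∈ s, Finsupp.single j 1) 1 := by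
  classical
  induction s using Finset.induction with
  | empty => simp [monomial_zero']
  | insert _ _ h ih =>
      rw [Finset.prod_insert h, Finset.sum_insert h, ih, X, monomial_mul, one_mul]

lemma monomial_mem_span {E : ι → (σ →₀ ℕ)} {c : σ →₀ ℕ} (a : k)
    (h : ∃ t, E t ≤ c) :
    monomial c a ∈ Ideal.span (Set.range fun t => (monomial (E t) 1 : MvPolynomial σ k)) := by
  obtain ⟨t, ht⟩ := h
  have : monomial c a = monomial (c - E t) a * monomial (E t) 1 := by
    rw [monomial_mul, mul_one, tsub_add_cancel_of_le ht]
  rw [this]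
  exact Ideal.mul_mem_left _ _ (Ideal.subset_span ⟨t, rfl⟩)

lemma exists_le_of_mem_span {E : ι → (σ →₀ ℕ)} {f : MvPolynomial σ k}
    (hf : f ∈ Ideal.span (Set.range fun t => (monomial (E t) 1 : MvPolynomial σ k)))
    {c : σ →₀ ℕ} (hc : c ∈ f.support) : ∃ t, E t ≤ c := by
  by_contra hno
  push_neg at hno
  obtain ⟨g, hg⟩ := (Submodule.mem_span_range_iff_exists_fun (MvPolynomial σ k)).1 hf
  apply mem_support_iff.1 hc
  rw [← hg]
  have : ∀ t : ι, coeff c (g t • monomial (E t) (1 : k)) = 0 := by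
    intro t
    rw [smul_eq_mul, coeff_mul_monomial']
    simp [hno t]
  rw [← MvPolynomial.lcoeff_apply, map_sum]
  simp only [MvPolynomial.lcoeff_apply]
  exact Finset.sum_eq_zero fun t _ => this t

lemma mem_span_of_forall {E : ι → (σ →₀ ℕ)} {f : MvPolynomial σ k}
    (h : ∀ c ∈ f.support, ∃ t, E t ≤ c) :
    f ∈ Ideal.span (Set.range fun t => (monomial (E t) 1 : MvPolynomial σ k)) := by
  rw [f.as_sum]
  exact Ideal.sum_mem _ fun c hc => monomial_mem_span _ (h c hc)

end MonIdeal


lemma fin_shift_ne {n : ℕ} [NeZero n] {c : ℕ} (hc : 0 < c) (hcn : c < n) (a : Fin n) :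
    a + (c : Fin n) ≠ a := by
  intro h
  have h0 : (c : Fin n) = 0 := by
    have := congrArg (fun x => x - a) h
    simpa [add_comm, add_sub_cancel_right] using this
  rw [Fin.natCast_eq_zero] at h0
  exact absurd (Nat.le_of_dvd hc h0) (by omega)

section Cyc
variable {n : ℕ} [NeZero n]

lemma closedNbhd_cycle (hn : 2 ≤ n) (i : Fin n) :
    closedNbhd (SimpleGraph.cycleGraph n) i = {i - 1, i, i + 1} := by
  have : NeZero n := ‹_›
  obtain ⟨m, rfl⟩ : ∃ m, n = m + 2 := ⟨n - 2, by omega⟩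
  ext j
  simp only [closedNbhd, Finset.mem_filter, Finset.mem_univ, true_and,
    SimpleGraph.cycleGraph_adj, Finset.mem_insert, Finset.mem_singleton]
  constructor
  · rintro (rfl | h | h)
    · exact Or.inr (Or.inl rfl)
    · exact Or.inl (by linear_combination -h)
    · exact Or.inr (Or.inr (by linear_combination h))
  · rintro (rfl | rfl | rfl)
    · exact Or.inr (Or.inl (by ring))
    · exact Or.inl rfl
    · exact Or.inr (Or.inr (by ring))

/-- exponent vector of the closed-neighborhood monomial -/
noncomputable def nu (n : ℕ) (a : Fin n) : Fin n →₀ ℕ :=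
  ∑ j ∈ closedNbhd (SimpleGraph.cycleGraph n) a, Finsupp.single j 1

lemma indicator_apply (s : Finset (Fin n)) (j : Fin n) :
    (∑ x ∈ s, Finsupp.single x (1 : ℕ)) j = if j ∈ s then 1 else 0 := by
  classical
  rw [Finset.sum_apply']
  simp only [Finsupp.single_apply]
  rw [Finset.sum_ite_eq' s j (fun _ => 1)]

lemma nu_apply (hn : 2 ≤ n) (a j : Fin n) :
    nu n a j = if j = a - 1 ∨ j = a ∨ j = a + 1 then 1 else 0 := by
  rw [nu, indicator_apply, closedNbhd_cycle hn]
  simp [Finset.mem_insert]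

lemma nu_apply_le (hn : 3 ≤ n) (a j : Fin n) : nu n a j ≤ 1 := by
  rw [nu_apply (by omega)]; split <;> omega

lemma one_le_nu_iff (hn : 2 ≤ n) (a j : Fin n) :
    1 ≤ nu n a j ↔ (j = a - 1 ∨ j = a ∨ j = a + 1) := by
  rw [nu_apply hn]; split <;> simp_all

lemma nu_total (hn : 3 ≤ n) (a : Fin n) : ∑ j, nu n a j = 3 := by
  have h1 : a - 1 ≠ a := by
    intro h
    exact fin_shift_ne (c := 1) (by omega) (by omega) a (by push_cast; linear_combination -h)
  have h2 : a - 1 ≠ a + 1 := by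
    intro h
    exact fin_shift_ne (c := 2) (by omega) (by omega) (a - 1) (by push_cast; linear_combination -h)
  have h3 : a ≠ a + 1 := fun h =>
    fin_shift_ne (c := 1) (by omega) (by omega) a (by push_cast; linear_combination -h)
  simp only [nu, closedNbhd_cycle (by omega : 2 ≤ n), Finset.sum_apply']
  rw [Finset.sum_comm]
  have inner : ∀ x : Fin n, ∑ j, (Finsupp.single x (1 : ℕ)) j = 1 := by
    intro x
    simp only [Finsupp.single_apply]
    rw [Finset.sum_ite_eq Finset.univ x (fun _ => 1)]
    simp
  rw [Finset.sum_congr rfl (fun x _ => inner x)]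
  rw [Finset.sum_const]
  rw [Finset.card_insert_of_notMem (by simp [h1, h2]),
    Finset.card_insert_of_notMem (by simp [h3]), Finset.card_singleton]
  rfl


lemma cast_ne_zero' {c : ℕ} (hc : 0 < c) (hcn : c < n) : (c : Fin n) ≠ 0 := by
  intro h
  rw [Fin.natCast_eq_zero] at h
  exact absurd (Nat.le_of_dvd hc h) (by omega)

lemma comb (hn : 3 ≤ n) (hne : n ≠ 5) (d : Fin n →₀ ℕ)
    (hB : ∀ a b : Fin n, ¬ (nu n a + nu n b ≤ d))
    (hA : ∀ i : Fin n, ∃ a b : Fin n, nu n a + nu n b ≤ d + Finsupp.single i 1) :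
    False := by
  have key : ∀ i : Fin n, ∃ a b : Fin n,
      (∀ j, nu n a j + nu n b j ≤ d j + if i = j then 1 else 0) ∧
      nu n a i + nu n b i = d i + 1 := by
    intro i
    obtain ⟨a, b, hab⟩ := hA i
    have hpt : ∀ j, nu n a j + nu n b j ≤ d j + if i = j then 1 else 0 := by
      intro j
      have := Finsupp.le_def.1 hab j
      simpa [Finsupp.add_apply, Finsupp.single_apply] using this
    obtain ⟨j0, hj0⟩ : ∃ j, d j < nu n a j + nu n b j := by
      by_contra hno; push_neg at hno
      exact hB a b (Finsupp.le_def.2 (fun j => by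
        have := hno j; simp only [Finsupp.add_apply]; omega))
    have hij : i = j0 := by
      by_contra h
      have := hpt j0
      rw [if_neg h] at this
      omega
    subst hij
    refine ⟨a, b, hpt, ?_⟩
    have := hpt i
    rw [if_pos rfl] at this
    omega
  have hd1 : ∀ i, d i ≤ 1 := by
    intro i
    obtain ⟨a, b, _, he⟩ := key i
    have h1 := nu_apply_le hn a i
    have h2 := nu_apply_le hn b i
    omega
  have htot : 5 ≤ ∑ j, d j := by
    obtain ⟨a, b, hpt, _⟩ := key 0
    have hsum : ∑ j, (nu n a j + nu n b j) ≤ ∑ j, (d j + if (0:Fin n) = j then 1 else 0) :=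
      Finset.sum_le_sum (fun j _ => hpt j)
    rw [Finset.sum_add_distrib, Finset.sum_add_distrib, nu_total hn, nu_total hn,
      Finset.sum_ite_eq Finset.univ (0 : Fin n) (fun _ => 1)] at hsum
    simp only [Finset.mem_univ, if_pos] at hsum
    omega
  by_cases hsmall : n < 6
  · have hub : ∑ j, d j ≤ ∑ _j : Fin n, 1 := Finset.sum_le_sum (fun j _ => hd1 j)
    rw [Finset.sum_const, Finset.card_univ, Fintype.card_fin, smul_eq_mul, mul_one] at hub
    omega
  push_neg at hsmall
  have hne_succ : ∀ x : Fin n, ¬ (x = x + 1) := by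
    intro x h
    exact fin_shift_ne (c := 1) (by omega) (by omega) x (by push_cast; linear_combination -h)
  have hsucc : ∀ i : Fin n, 1 ≤ d i → 1 ≤ d (i + 1) := by
    intro i hdi
    obtain ⟨a, b, hpt, he⟩ := key i
    have hdi1 : d i = 1 := le_antisymm (hd1 i) hdi
    have hla := nu_apply_le hn a i
    have hlb := nu_apply_le hn b i
    have hai : 1 ≤ nu n a i := by omega
    have hbi : 1 ≤ nu n b i := by omega
    have contra : ∀ j : Fin n, ¬ (i = j) → 1 ≤ nu n a j → 1 ≤ nu n b j → False := by
      intro j hji hja hjb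
      have hp := hpt j
      rw [if_neg hji] at hp
      have := hd1 j
      omega
    have goodcase : ∀ c : Fin n, c = i + 1 → (1 ≤ nu n c (i + 1)) →
        (c = a ∨ c = b) → 1 ≤ d (i + 1) := by
      intro c hc hnu hcab
      have hp := hpt (i + 1)
      rw [if_neg (hne_succ i)] at hp
      rcases hcab with rfl | rfl <;> omega
    have hma := (one_le_nu_iff (by omega) a i).1 hai
    have hmb := (one_le_nu_iff (by omega) b i).1 hbi
    have hconva : a = i + 1 ∨ a = i ∨ a = i - 1 := by
      rcases hma with h | h | h
      · exact Or.inl (by linear_combination -h)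
      · exact Or.inr (Or.inl h.symm)
      · exact Or.inr (Or.inr (by linear_combination -h))
    have hconvb : b = i + 1 ∨ b = i ∨ b = i - 1 := by
      rcases hmb with h | h | h
      · exact Or.inl (by linear_combination -h)
      · exact Or.inr (Or.inl h.symm)
      · exact Or.inr (Or.inr (by linear_combination -h))
    have hm1 : ¬ (i = i - 1) := by
      intro h
      exact fin_shift_ne (c := 1) (by omega) (by omega) (i-1)
        (by push_cast; linear_combination h)
    have hm2 : ¬ (i = i - 2) := by
      intro h
      exact fin_shift_ne (c := 2) (by omega) (by omega) (i-2)
        (by push_cast; linear_combination h)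
    have nu_mid : ∀ x : Fin n, 1 ≤ nu n x x :=
      fun x => (one_le_nu_iff (by omega) x x).2 (Or.inr (Or.inl rfl))
    have nu_left : ∀ x : Fin n, 1 ≤ nu n x (x - 1) :=
      fun x => (one_le_nu_iff (by omega) x (x - 1)).2 (Or.inl rfl)
    have nu_right : ∀ x : Fin n, 1 ≤ nu n x (x + 1) :=
      fun x => (one_le_nu_iff (by omega) x (x + 1)).2 (Or.inr (Or.inr rfl))
    rcases hconva with ha | ha | ha <;> rcases hconvb with hb | hb | hb
    · exact goodcase a ha (by rw [ha]; exact nu_mid _) (Or.inl rfl)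
    · exact goodcase a ha (by rw [ha]; exact nu_mid _) (Or.inl rfl)
    · exact goodcase a ha (by rw [ha]; exact nu_mid _) (Or.inl rfl)
    · exact goodcase b hb (by rw [hb]; exact nu_mid _) (Or.inr rfl)
    · exact (contra (i + 1) (hne_succ i) (by rw [ha]; exact nu_right i)
        (by rw [hb]; exact nu_right i)).elim
    · exact (contra (i - 1) hm1 (by rw [ha]; exact nu_left i)
        (by rw [hb]; exact nu_mid _)).elim
    · exact goodcase b hb (by rw [hb]; exact nu_mid _) (Or.inr rfl)
    · exact (contra (i - 1) hm1 (by rw [ha]; exact nu_mid _)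
        (by rw [hb]; exact nu_left i)).elim
    · have hlv : 1 ≤ nu n (i - 1) (i - 2) := by
        refine (one_le_nu_iff (by omega) _ _).2 (Or.inl ?_)
        ring
      exact (contra (i - 2) hm2 (by rw [ha]; exact hlv) (by rw [hb]; exact hlv)).elim
  obtain ⟨i0, hi0⟩ : ∃ i, 1 ≤ d i := by
    by_contra h; push_neg at h
    have : ∑ j, d j = 0 := Finset.sum_eq_zero fun j _ => by have := h j; omega
    omega
  have hall : ∀ j : Fin n, 1 ≤ d j := by
    have hm : ∀ m : ℕ, 1 ≤ d (i0 + (m : Fin n)) := by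
      intro m
      induction m with
      | zero => simpa using hi0
      | succ m ih =>
          have hstep : (i0 + ((m + 1 : ℕ) : Fin n)) = (i0 + (m : Fin n)) + 1 := by
            push_cast; ring
          rw [hstep]
          exact hsucc _ ih
    intro j
    have hj : i0 + (((j - i0).val : ℕ) : Fin n) = j := by
      rw [Fin.cast_val_eq_self]; ring
    rw [← hj]
    exact hm _
  apply hB 0 3
  rw [Finsupp.le_def]
  intro j
  rw [Finsupp.add_apply]
  have hj := hall j
  have hl0 := nu_apply_le hn 0 j
  have hl3 := nu_apply_le hn 3 j
  by_cases h0 : 1 ≤ nu n 0 j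
  · by_cases h3 : 1 ≤ nu n 3 j
    · exfalso
      have m0 := (one_le_nu_iff (by omega) 0 j).1 h0
      have m3 := (one_le_nu_iff (by omega) 3 j).1 h3
      have c1 : ((1 : ℕ) : Fin n) ≠ 0 := cast_ne_zero' (by omega) (by omega)
      have c2 : ((2 : ℕ) : Fin n) ≠ 0 := cast_ne_zero' (by omega) (by omega)
      have c3 : ((3 : ℕ) : Fin n) ≠ 0 := cast_ne_zero' (by omega) (by omega)
      have c4 : ((4 : ℕ) : Fin n) ≠ 0 := cast_ne_zero' (by omega) (by omega)
      have c5 : ((5 : ℕ) : Fin n) ≠ 0 := cast_ne_zero' (by omega) (by omega)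
      rcases m0 with h | h | h <;> rcases m3 with h' | h' | h'
      · exact c3 (by push_cast; linear_combination h - h')
      · exact c4 (by push_cast; linear_combination h - h')
      · exact c5 (by push_cast; linear_combination h - h')
      · exact c2 (by push_cast; linear_combination h - h')
      · exact c3 (by push_cast; linear_combination h - h')
      · exact c4 (by push_cast; linear_combination h - h')
      · exact c1 (by push_cast; linear_combination h - h')
      · exact c2 (by push_cast; linear_combination h - h')
      · exact c3 (by push_cast; linear_combination h - h')
    · omega
  · omega

end Cyc

section SqSpan
variable {k : Type*} [Field k] {n : ℕ}

lemma NI_sq_eq :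
    (NI k (SimpleGraph.cycleGraph n)) ^ 2 =
      Ideal.span (Set.range fun p : Fin n × Fin n =>
        (monomial (nu n p.1 + nu n p.2) 1 : MvPolynomial (Fin n) k)) := by
  have hNI : NI k (SimpleGraph.cycleGraph n) =
      Ideal.span (Set.range fun i => (monomial (nu n i) 1 : MvPolynomial (Fin n) k)) := by
    have he : (fun i => ∏ j ∈ closedNbhd (SimpleGraph.cycleGraph n) i, (X j : MvPolynomial (Fin n) k)) =
        fun i => monomial (nu n i) 1 := funext fun i => prod_X_eq_monomial _
    rw [NI, he]
  rw [hNI, pow_two, Ideal.span_mul_span']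
  congr 1
  ext x
  simp only [Set.mem_mul, Set.mem_range]
  constructor
  · rintro ⟨_, ⟨a, rfl⟩, _, ⟨b, rfl⟩, rfl⟩
    exact ⟨(a, b), by rw [monomial_mul, one_mul]⟩
  · rintro ⟨⟨a, b⟩, rfl⟩
    exact ⟨_, ⟨a, rfl⟩, _, ⟨b, rfl⟩, by rw [monomial_mul, one_mul]⟩

lemma maxIdeal_eq_ker :
    maxIdeal k n = RingHom.ker (constantCoeff : MvPolynomial (Fin n) k →+* k) := by
  apply le_antisymm
  · rw [maxIdeal, Ideal.span_le]
    rintro _ ⟨i, rfl⟩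
    simp [RingHom.mem_ker]
  · intro p hp
    rw [RingHom.mem_ker] at hp
    rw [p.as_sum]
    apply Ideal.sum_mem
    intro c hc
    by_cases h0 : c = 0
    · subst h0
      have : coeff 0 p = 0 := hp
      simp [this]
    · obtain ⟨i, hi⟩ : ∃ i, c i ≠ 0 := by
        by_contra hall
        push_neg at hall
        exact h0 (Finsupp.ext fun i => hall i)
      have hle : Finsupp.single i 1 ≤ c := by
        rw [Finsupp.le_def]
        intro j
        rw [Finsupp.single_apply]
        split
        · next h => subst h; omega
        · omega
      have : (monomial c) (coeff c p) =
          (monomial (c - Finsupp.single i 1)) (coeff c p) * X i := by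
        rw [X, monomial_mul, mul_one, tsub_add_cancel_of_le hle]
      rw [this]
      exact Ideal.mul_mem_left _ _ (Ideal.subset_span ⟨i, rfl⟩)

lemma maxIdeal_isMaximal : (maxIdeal k n).IsMaximal := by
  rw [maxIdeal_eq_ker]
  exact RingHom.ker_isMaximal_of_surjective _ (fun a => ⟨C a, constantCoeff_C _ _⟩)

lemma maxIdeal_ne_top : maxIdeal k n ≠ ⊤ := (maxIdeal_isMaximal).ne_top

lemma smul_mk {J : Ideal (MvPolynomial (Fin n) k)} (r f : MvPolynomial (Fin n) k) :
    r • (Ideal.Quotient.mk J f) = Ideal.Quotient.mk J (r * f) := rfl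

lemma assoc_iff_witness (J : Ideal (MvPolynomial (Fin n) k)) :
    IsAssociatedPrime (maxIdeal k n) (MvPolynomial (Fin n) k ⧸ J) ↔
      ∃ f, f ∉ J ∧ ∀ i, X i * f ∈ J := by
  constructor
  · intro hA
    obtain ⟨hp, x, hx⟩ := isAssociatedPrime_iff.1 hA
    obtain ⟨f, rfl⟩ := Ideal.Quotient.mk_surjective x
    refine ⟨f, ?_, ?_⟩
    · intro hf
      apply maxIdeal_ne_top (k := k) (n := n)
      rw [hx]
      rw [eq_top_iff]
      intro r _
      rw [Submodule.mem_colon_singleton, Submodule.mem_bot, smul_mk,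
        Ideal.Quotient.eq_zero_iff_mem]
      exact J.mul_mem_left _ hf
    · intro i
      have hXi : X i ∈ maxIdeal k n := Ideal.subset_span ⟨i, rfl⟩
      rw [hx, Submodule.mem_colon_singleton, Submodule.mem_bot] at hXi
      rw [smul_mk] at hXi
      exact (Ideal.Quotient.eq_zero_iff_mem).1 hXi
  · rintro ⟨f, hf, hX⟩
    refine isAssociatedPrime_iff.2 ⟨maxIdeal_isMaximal.isPrime, Ideal.Quotient.mk J f, ?_⟩
    have hle : maxIdeal k n ≤ (⊥ : Submodule _ (MvPolynomial (Fin n) k ⧸ J)).colon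
        {Ideal.Quotient.mk J f} := by
      rw [maxIdeal, Ideal.span_le]
      rintro _ ⟨i, rfl⟩
      rw [SetLike.mem_coe, Submodule.mem_colon_singleton, Submodule.mem_bot, smul_mk]
      exact (Ideal.Quotient.eq_zero_iff_mem).2 (hX i)
    refine (maxIdeal_isMaximal.eq_of_le ?_ hle).symm ▸ rfl
    intro htop
    have h1 : (1 : MvPolynomial (Fin n) k) ∈
        (⊥ : Submodule _ (MvPolynomial (Fin n) k ⧸ J)).colon {Ideal.Quotient.mk J f} :=
      htop ▸ Submodule.mem_top
    rw [Submodule.mem_colon_singleton, Submodule.mem_bot, smul_mk, one_mul] at h1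
    exact hf ((Ideal.Quotient.eq_zero_iff_mem).1 h1)

end SqSpan


section Witness
variable {k : Type*} [Field k]

noncomputable def allones : Fin 5 →₀ ℕ := ∑ j, Finsupp.single j 1

lemma allones_apply (j : Fin 5) : allones j = 1 := by
  rw [allones, indicator_apply]
  simp

lemma nu5_pair_le (i : Fin 5) :
    nu 5 (i - 1) + nu 5 (i + 1) ≤ allones + Finsupp.single i 1 := by
  rw [Finsupp.le_def]
  intro j
  rw [Finsupp.add_apply, Finsupp.add_apply, allones_apply, Finsupp.single_apply]
  have hl1 := nu_apply_le (n := 5) (by omega) (i - 1) j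
  have hl2 := nu_apply_le (n := 5) (by omega) (i + 1) j
  by_cases h1 : 1 ≤ nu 5 (i - 1) j
  · by_cases h2 : 1 ≤ nu 5 (i + 1) j
    · have m1 := (one_le_nu_iff (by omega) (i - 1) j).1 h1
      have m2 := (one_le_nu_iff (by omega) (i + 1) j).1 h2
      have hji : i = j := by
        have c1 : ((1 : ℕ) : Fin 5) ≠ 0 := cast_ne_zero' (by omega) (by omega)
        have c2 : ((2 : ℕ) : Fin 5) ≠ 0 := cast_ne_zero' (by omega) (by omega)
        have c3 : ((3 : ℕ) : Fin 5) ≠ 0 := cast_ne_zero' (by omega) (by omega)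
        have c4 : ((4 : ℕ) : Fin 5) ≠ 0 := cast_ne_zero' (by omega) (by omega)
        rcases m1 with h | h | h <;> rcases m2 with h' | h' | h'
        · exact (c2 (by linear_combination h - h')).elim
        · exact (c3 (by linear_combination h - h')).elim
        · exact (c4 (by linear_combination h - h')).elim
        · exact (c1 (by linear_combination h - h')).elim
        · exact (c2 (by linear_combination h - h')).elim
        · exact (c3 (by linear_combination h - h')).elim
        · linear_combination -h
        · exact (c1 (by linear_combination h - h')).elim
        · exact (c2 (by linear_combination h - h')).elim
      rw [if_pos hji]
      omega
    · rw [not_le] at h2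
      split <;> omega
  · rw [not_le] at h1
    split <;> omega

lemma witness_not_mem :
    (monomial allones 1 : MvPolynomial (Fin 5) k) ∉ (NI k (SimpleGraph.cycleGraph 5)) ^ 2 := by
  rw [NI_sq_eq]
  intro hmem
  have hsupp : allones ∈ (monomial allones (1 : k)).support := by
    rw [support_monomial, if_neg (one_ne_zero)]
    exact Finset.mem_singleton_self _
  obtain ⟨⟨a, b⟩, hab⟩ := exists_le_of_mem_span hmem hsupp
  have hsum : ∑ j, (nu 5 a + nu 5 b) j ≤ ∑ j, allones j :=
    Finset.sum_le_sum (fun j _ => Finsupp.le_def.1 hab j)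
  simp only [Finsupp.add_apply, allones_apply] at hsum
  rw [Finset.sum_add_distrib, nu_total (by omega), nu_total (by omega)] at hsum
  simp at hsum

lemma witness_mul_mem (i : Fin 5) :
    X i * (monomial allones 1 : MvPolynomial (Fin 5) k) ∈
      (NI k (SimpleGraph.cycleGraph 5)) ^ 2 := by
  rw [NI_sq_eq]
  have : X i * (monomial allones 1 : MvPolynomial (Fin 5) k) =
      monomial (allones + Finsupp.single i 1) 1 := by
    rw [X, monomial_mul, one_mul, add_comm]
  rw [this]
  exact monomial_mem_span _ ⟨(i - 1, i + 1), nu5_pair_le i⟩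

end Witness

/-- For the cycle `Cₙ` (`n ≥ 3`), the maximal homogeneous ideal `(x_1, …, x_n)` is an
associated prime of `S/NI(Cₙ)^2` if and only if `n = 5`. -/
theorem cycle_maxIdeal_isAssociatedPrime_iff {n : ℕ} (hn : 3 ≤ n) {k : Type*} [Field k] :
    IsAssociatedPrime (maxIdeal k n)
        (MvPolynomial (Fin n) k ⧸ (NI k (SimpleGraph.cycleGraph n) ^ 2)) ↔ n = 5 := by
  have hNZ : NeZero n := ⟨by omega⟩
  rw [assoc_iff_witness]
  constructor
  · rintro ⟨f, hf, hX⟩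
    rw [NI_sq_eq] at hf hX
    by_contra hne
    have hnm : ¬ ∀ c ∈ f.support, ∃ t : Fin n × Fin n, nu n t.1 + nu n t.2 ≤ c :=
      fun h => hf (mem_span_of_forall h)
    push_neg at hnm
    obtain ⟨c, hcsupp, hno⟩ := hnm
    refine comb hn hne c (fun a b h => hno (a, b) h) ?_
    intro i
    have hsupp : c + Finsupp.single i 1 ∈ (X i * f).support := by
      rw [MvPolynomial.mem_support_iff, mul_comm, MvPolynomial.coeff_mul_X]
      exact MvPolynomial.mem_support_iff.1 hcsupp
    obtain ⟨t, ht⟩ := exists_le_of_mem_span (hX i) hsupp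
    exact ⟨t.1, t.2, ht⟩
  · rintro rfl
    exact ⟨monomial allones 1, witness_not_mem, witness_mul_mem⟩
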